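/- With notation as before (λ > 0), the total eigencurrent across a cut (S', S'') is maximized over all partitions S = S' ∪̇ S'' when S' = S_+ := {i : φ_i ≥ 0} and S'' = S_- := {i : φ_i < 0}; i.e., for every partition, ∑_{i∈S', j∈S''} F_{ij} ≤ ∑_{i∈S_+, j∈S_-} F_{ij} = λ ∑_{i∈S_+} π_i φ_i. -/

import Mathlib

/-- The total eigencurrent across a cut `(S', S'')` is maximized when
`S' = S₊ = {i : φ i ≥ 0}` and `S'' = S₋ = {i : φ i < 0}`; its maximal value equals
`λ ∑_{i ∈ S₊} π i * φ i`. -/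
theorem eigencurrent_emission_absorption_cut_maximal
    (N : ℕ) (L : Matrix (Fin N) (Fin N) ℝ) (π : Fin N → ℝ)
    (hπpos : ∀ i, 0 < π i) (hπsum : ∑ i, π i = 1)
    (hoff : ∀ i j, i ≠ j → 0 ≤ L i j)
    (hrow : ∀ i, ∑ j, L i j = 0)
    (hdb : ∀ i j, π i * L i j = π j * L j i)
    (lam : ℝ) (hlam : 0 < lam) (φ : Fin N → ℝ)
    (heig : L.mulVec φ = (-lam) • φ)
    (F : Fin N → Fin N → ℝ)
    (hF : ∀ i j, F i j = if i = j then 0 else π i * L i j * (φ i - φ j))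
    (Splus Sminus : Finset (Fin N))
    (hplus : Splus = Finset.univ.filter (fun i => 0 ≤ φ i))
    (hminus : Sminus = Finset.univ.filter (fun i => φ i < 0)) :
    (∀ S' S'' : Finset (Fin N), Disjoint S' S'' → S' ∪ S'' = Finset.univ →
      ∑ i ∈ S', ∑ j ∈ S'', F i j ≤ ∑ i ∈ Splus, ∑ j ∈ Sminus, F i j) ∧
    ∑ i ∈ Splus, ∑ j ∈ Sminus, F i j = lam * ∑ i ∈ Splus, π i * φ i := by
  -- antisymmetry of F
  have hanti : ∀ i j, F j i = - F i j := by
    intro i j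
    by_cases h : i = j
    · subst h; simp [hF]
    · rw [hF, hF, if_neg h, if_neg (Ne.symm h), ← hdb]; ring
  -- sum of F over a symmetric block is zero
  have hdiag : ∀ S : Finset (Fin N), ∑ i ∈ S, ∑ j ∈ S, F i j = 0 := by
    intro S
    have h2 : ∑ i ∈ S, ∑ j ∈ S, F i j = ∑ i ∈ S, ∑ j ∈ S, (- F i j) := by
      rw [Finset.sum_comm]
      exact Finset.sum_congr rfl fun i _ => Finset.sum_congr rfl fun j _ => hanti i j
    simp only [Finset.sum_neg_distrib] at h2
    linarith
  -- row sums of F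
  have hrowF : ∀ i, ∑ j, F i j = lam * (π i * φ i) := by
    intro i
    have hmv : ∑ j, L i j * φ j = -lam * φ i := by
      have := congrFun heig i
      simpa [Matrix.mulVec, dotProduct] using this
    have h1 : ∑ j, F i j = ∑ j, (π i * φ i * L i j - π i * (L i j * φ j)) := by
      refine Finset.sum_congr rfl fun j _ => ?_
      rw [hF]
      by_cases h : i = j
      · subst h; simp; ring
      · rw [if_neg h]; ring
    rw [h1, Finset.sum_sub_distrib, ← Finset.mul_sum, ← Finset.mul_sum, hrow, hmv]
    ring
  -- cut value formula
  have hcut : ∀ S' S'' : Finset (Fin N), Disjoint S' S'' → S' ∪ S'' = Finset.univ →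
      ∑ i ∈ S', ∑ j ∈ S'', F i j = lam * ∑ i ∈ S', π i * φ i := by
    intro S' S'' hd hu
    have hsplit : ∀ i, ∑ j ∈ S', F i j + ∑ j ∈ S'', F i j = ∑ j, F i j := by
      intro i; rw [← Finset.sum_union hd, hu]
    calc ∑ i ∈ S', ∑ j ∈ S'', F i j
        = ∑ i ∈ S', (∑ j, F i j - ∑ j ∈ S', F i j) :=
          Finset.sum_congr rfl fun i _ => by rw [← hsplit i]; ring
      _ = ∑ i ∈ S', ∑ j, F i j - ∑ i ∈ S', ∑ j ∈ S', F i j := Finset.sum_sub_distrib _ _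
      _ = lam * ∑ i ∈ S', π i * φ i := by
          rw [hdiag S', sub_zero, Finset.mul_sum]
          exact Finset.sum_congr rfl fun i _ => hrowF i
  have hdisj : Disjoint Splus Sminus := by
    subst hplus hminus
    simp [Finset.disjoint_left, not_lt]
  have hunion : Splus ∪ Sminus = Finset.univ := by
    subst hplus hminus
    ext i
    simp [le_or_gt]
  have heq := hcut Splus Sminus hdisj hunion
  refine ⟨fun S' S'' hd hu => ?_, heq⟩
  rw [hcut S' S'' hd hu, heq]
  have hmono : ∑ i ∈ S', π i * φ i ≤ ∑ i ∈ Splus, π i * φ i := by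
    have h1 : ∑ i ∈ S'.filter (fun i => 0 ≤ φ i), π i * φ i
        + ∑ i ∈ S'.filter (fun i => ¬ 0 ≤ φ i), π i * φ i = ∑ i ∈ S', π i * φ i :=
      Finset.sum_filter_add_sum_filter_not S' _ _
    have h2 : ∑ i ∈ S'.filter (fun i => ¬ 0 ≤ φ i), π i * φ i ≤ 0 := by
      refine Finset.sum_nonpos fun i hi => ?_
      have : φ i < 0 := lt_of_not_ge (Finset.mem_filter.mp hi).2
      exact mul_nonpos_of_nonneg_of_nonpos (hπpos i).le this.le
    have h3 : ∑ i ∈ S'.filter (fun i => 0 ≤ φ i), π i * φ i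
        ≤ ∑ i ∈ Splus, π i * φ i := by
      refine Finset.sum_le_sum_of_subset_of_nonneg ?_ fun i hi _ => ?_
      · subst hplus
        intro i hi
        simp only [Finset.mem_filter] at hi ⊢
        exact ⟨Finset.mem_univ i, hi.2⟩
      · rw [hplus] at hi
        exact mul_nonneg (hπpos i).le (Finset.mem_filter.mp hi).2
    linarith
  exact mul_le_mul_of_nonneg_left hmono hlam.le
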